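/- Let G be a finite simple graph and let F₀ ⊆ E(G) be an edge set such that every connected component of G ∖ F₀ is a tree (i.e. G ∖ F₀ is a forest). Then there exists a set F ⊆ E(G) ∖ F₀ with |F| ≤ 10·|F₀| that is dismembering for (G ∖ F₀, V(F₀)), where V(F₀) denotes the set of endpoints of edges in F₀. -/

import Mathlib

set_option linter.unusedSectionVars false
set_option linter.unusedVariables false
set_option maxHeartbeats 1000000


variable {V : Type*}

/-- The set of endpoints of edges of `F`. -/
def edgeVerts (F : Finset (Sym2 V)) : Set V := {v | ∃ e ∈ F, v ∈ e}

/-- `F` is dismembering for `(G, X)`: every connected component of `G` minus the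
edges of `F` either contains at most one vertex of `X ∪ V(F)`, or contains no
vertex of `X` and exactly two vertices of `V(F)`, each incident to exactly one
edge of `F`. -/
def IsDismembering [DecidableEq V] (G : SimpleGraph V) (X : Set V)
    (F : Finset (Sym2 V)) : Prop :=
  ∀ c : (G.deleteEdges (F : Set (Sym2 V))).ConnectedComponent,
    (c.supp ∩ (X ∪ edgeVerts F)).Subsingleton ∨
      (c.supp ∩ X = ∅ ∧
        ∃ a b : V, a ≠ b ∧ c.supp ∩ edgeVerts F = {a, b} ∧
          (F.filter fun e => a ∈ e).card = 1 ∧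
          (F.filter fun e => b ∈ e).card = 1)

section Stmt4AuxSection

open SimpleGraph Walk

namespace Stmt4Aux

variable [DecidableEq V] {G : SimpleGraph V}

lemma mem_support_of_edge {u v : V} {p : G.Walk u v} {e : Sym2 V} {z : V}
    (he : e ∈ p.edges) (hz : z ∈ e) : z ∈ p.support := by
  induction e with
  | _ α β =>
    rcases Sym2.mem_iff.mp hz with rfl | rfl
    · exact p.fst_mem_support_of_mem_edges he
    · exact p.snd_mem_support_of_mem_edges he

lemma edge_ne {u v : V} {p : G.Walk u v} {e : Sym2 V} (he : e ∈ p.edges) :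
    ∃ α β : V, e = s(α, β) ∧ α ≠ β ∧ α ∈ p.support ∧ β ∈ p.support := by
  induction e with
  | _ α β =>
    refine ⟨α, β, rfl, ?_, p.fst_mem_support_of_mem_edges he,
      p.snd_mem_support_of_mem_edges he⟩
    have := p.edges_subset_edgeSet he
    rw [SimpleGraph.mem_edgeSet] at this
    exact this.ne

lemma exists_edge_start {u v : V} (p : G.Walk u v) (h : u ≠ v) :
    ∃ e ∈ p.edges, u ∈ e := by
  cases p with
  | nil => exact absurd rfl h
  | cons h' q => exact ⟨s(u, _), by rw [Walk.edges_cons]; exact List.mem_cons_self,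
      Sym2.mem_mk_left _ _⟩

lemma unique_edge_start {u v : V} {p : G.Walk u v} (hp : p.IsPath) {e₁ e₂ : Sym2 V}
    (h₁ : e₁ ∈ p.edges) (h₂ : e₂ ∈ p.edges) (hu₁ : u ∈ e₁) (hu₂ : u ∈ e₂) : e₁ = e₂ := by
  cases p with
  | nil => simp at h₁
  | cons h' q =>
    rw [Walk.edges_cons, List.mem_cons] at h₁ h₂
    have hq : ∀ e : Sym2 V, e ∈ q.edges → u ∈ e → False := fun e he hue =>
      ((Walk.cons_isPath_iff _ _).mp hp).2 (mem_support_of_edge he hue)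
    rcases h₁ with rfl | h₁
    · rcases h₂ with rfl | h₂
      · rfl
      · exact absurd (hq _ h₂ hu₂) not_false
    · exact absurd (hq _ h₁ hu₁) not_false

lemma unique_edge_end {u v : V} {p : G.Walk u v} (hp : p.IsPath) {e₁ e₂ : Sym2 V}
    (h₁ : e₁ ∈ p.edges) (h₂ : e₂ ∈ p.edges) (hu₁ : v ∈ e₁) (hu₂ : v ∈ e₂) : e₁ = e₂ :=
  unique_edge_start hp.reverse (p := p.reverse)
    (by simpa [Walk.edges_reverse, List.mem_reverse] using h₁)
    (by simpa [Walk.edges_reverse, List.mem_reverse] using h₂) hu₁ hu₂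

lemma takeUntil_inter {u v w : V} {p : G.Walk v w} (hp : p.IsPath) (h : u ∈ p.support) :
    ∀ z, z ∈ (p.takeUntil u h).support → z ∈ (p.dropUntil u h).support → z = u := by
  intro z hz₁ hz₂
  have hs : p.support = (p.takeUntil u h).support ++ (p.dropUntil u h).support.tail := by
    rw [← Walk.support_append, Walk.take_spec]
  have hnd : p.support.Nodup := hp.support_nodup
  rw [hs] at hnd
  have hdc : (p.dropUntil u h).support = u :: (p.dropUntil u h).support.tail :=
    Walk.support_eq_cons _
  rw [hdc, List.mem_cons] at hz₂
  rcases hz₂ with rfl | hz₂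
  · rfl
  · exact absurd hz₂ (List.disjoint_of_nodup_append hnd hz₁)

lemma isPath_append {u v w : V} {p : G.Walk u v} {q : G.Walk v w}
    (hp : p.IsPath) (hq : q.IsPath) (hint : ∀ z, z ∈ p.support → z ∈ q.support → z = v) :
    (p.append q).IsPath := by
  rw [Walk.isPath_def, Walk.support_append]
  refine List.Nodup.append hp.support_nodup
    (hq.support_nodup.sublist (List.tail_sublist _)) ?_
  intro z hz₁ hz₂
  have hz₂' : z ∈ q.support := List.mem_of_mem_tail hz₂
  have : z = v := hint z hz₁ hz₂'
  subst this
  have hqc : q.support = z :: q.support.tail := Walk.support_eq_cons _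
  have := hq.support_nodup
  rw [hqc] at this
  exact (List.nodup_cons.mp this).1 hz₂

lemma path_nil {u v : V} {p : G.Walk u v} (hp : p.IsPath) (h : u = v) : p.Nil := by
  subst h
  cases p with
  | nil => exact Walk.nil_nil
  | cons h' q => exact absurd q.end_mem_support ((Walk.cons_isPath_iff _ _).mp hp).2

lemma path_ne {u v : V} {p : G.Walk u v} (hp : p.IsPath) (h : ¬ p.Nil) : u ≠ v :=
  fun huv => h (path_nil hp huv)

lemma not_reachable_of_cut (hG : G.IsAcyclic) {D : Set (Sym2 V)} {u v : V}
    (p : G.Walk u v) (hp : p.IsPath) {e : Sym2 V} (heD : e ∈ D) (hep : e ∈ p.edges) :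
    ¬ (G.deleteEdges D).Reachable u v := by
  rintro ⟨w⟩
  have hsub : ∀ e' ∈ w.edges, e' ∈ G.edgeSet := fun e' he' => by
    have := w.edges_subset_edgeSet he'
    rw [SimpleGraph.edgeSet_deleteEdges] at this
    exact this.1
  set wt := w.transfer G hsub with hwt
  have hbp : wt.bypass.IsPath := wt.bypass_isPath
  have huniq : (⟨wt.bypass, hbp⟩ : G.Path u v) = ⟨p, hp⟩ := hG.path_unique _ _
  have hpe : p = wt.bypass := (congrArg Subtype.val huniq).symm
  have he2 : e ∈ wt.edges := wt.edges_bypass_subset (hpe ▸ hep)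
  rw [Walk.edges_transfer] at he2
  have := w.edges_subset_edgeSet he2
  rw [SimpleGraph.edgeSet_deleteEdges] at this
  exact this.2 heD

lemma reachable_of_avoid {D : Set (Sym2 V)} {u v : V}
    (p : G.Walk u v) (h : ∀ e ∈ p.edges, e ∉ D) : (G.deleteEdges D).Reachable u v :=
  ⟨p.toDeleteEdges D h⟩

lemma acyclic_anti {H : SimpleGraph V} (h : H ≤ G) (hG : G.IsAcyclic) : H.IsAcyclic :=
  fun _ c hc => hG (c.mapLe h) (hc.mapLe h)

lemma firstNbr {α β : V} (R : G.Walk α β) (hR : R.IsPath) (hnn : ¬ R.Nil) :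
    ∃ u, s(α, u) ∈ R.edges ∧ u ∈ R.support ∧ u ≠ α := by
  cases R with
  | nil => exact absurd Walk.nil_nil hnn
  | cons h' q =>
    refine ⟨_, by rw [Walk.edges_cons]; exact List.mem_cons_self, ?_, ?_⟩
    · rw [Walk.support_cons]; exact List.mem_cons_of_mem _ q.start_mem_support
    · intro hq
      exact ((Walk.cons_isPath_iff _ _).mp hR).2 (hq ▸ q.start_mem_support)

lemma intOne {D : Set (Sym2 V)} {m x : V} (R : G.Walk m x) (hR : R.IsPath)
    (hav : ∀ e ∈ R.edges, m ∉ e → x ∉ e → e ∉ D)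
    (z : V) (hz : z ∈ R.support) (hzm : z ≠ m) (hzx : z ≠ x) :
    ∃ u, s(m, u) ∈ R.edges ∧ u ∈ R.support ∧ u ≠ m ∧ u ≠ x ∧
      (G.deleteEdges D).Reachable z u := by
  cases R with
  | nil => rw [Walk.support_nil, List.mem_singleton] at hz; exact absurd hz hzm
  | cons h' t =>
    rename_i y
    have htp : t.IsPath := ((Walk.cons_isPath_iff _ _).mp hR).1
    have hmt : m ∉ t.support := ((Walk.cons_isPath_iff _ _).mp hR).2
    have hzt : z ∈ t.support := by
      rw [Walk.support_cons, List.mem_cons] at hz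
      exact hz.resolve_left hzm
    have hym : y ≠ m := fun h => hmt (h ▸ t.start_mem_support)
    have hyx : y ≠ x := by
      intro h
      subst h
      have : t.Nil := path_nil htp rfl
      rw [Walk.nil_iff_support_eq] at this
      rw [this, List.mem_singleton] at hzt
      exact hzx hzt
    refine ⟨y, by rw [Walk.edges_cons]; exact List.mem_cons_self,
      by rw [Walk.support_cons]; exact List.mem_cons_of_mem _ t.start_mem_support,
      hym, hyx, ?_⟩
    refine ((reachable_of_avoid (t.takeUntil z hzt) ?_).symm)
    intro e he hD
    have heR : e ∈ t.edges := t.edges_takeUntil_subset hzt he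
    have heR' : e ∈ (Walk.cons h' t).edges := by
      rw [Walk.edges_cons]; exact List.mem_cons_of_mem _ heR
    refine hav e heR' ?_ ?_ hD
    · intro hme
      exact hmt (mem_support_of_edge heR hme)
    · intro hxe
      have hxseg : x ∈ (t.takeUntil z hzt).support := mem_support_of_edge he hxe
      exact hzx (takeUntil_inter htp hzt x hxseg (t.dropUntil z hzt).end_mem_support).symm

lemma firstHit {x t : V} (S : Set V) (Q : G.Walk x t) (hQ : Q.IsPath) (ht : t ∈ S) :
    ∃ (m : V) (R : G.Walk x m), R.IsPath ∧ m ∈ S ∧ (∀ z ∈ R.support, z ∈ Q.support) ∧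
      (∀ z ∈ R.support, z ∈ S → z = m) := by
  classical
  induction Q with
  | nil =>
    refine ⟨_, Walk.nil, Walk.IsPath.nil, ht, ?_, ?_⟩
    · intro z hz; exact hz
    · intro z hz _
      rw [Walk.support_nil, List.mem_singleton] at hz
      exact hz
  | cons h' q ih =>
    rename_i u y t'
    by_cases hx : u ∈ S
    · refine ⟨u, Walk.nil, Walk.IsPath.nil, hx, ?_, by simp⟩
      intro z hz
      rw [Walk.support_nil, List.mem_singleton] at hz
      subst hz
      exact Walk.start_mem_support _
    · have hqp : q.IsPath := ((Walk.cons_isPath_iff _ _).mp hQ).1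
      obtain ⟨m, R, hRp, hmS, hRsub, hRS⟩ := ih hqp ht
      refine ⟨m, Walk.cons h' R, ?_, hmS, ?_, ?_⟩
      · rw [Walk.cons_isPath_iff]
        exact ⟨hRp, fun hu => ((Walk.cons_isPath_iff _ _).mp hQ).2 (hRsub _ hu)⟩
      · intro z hz
        rw [Walk.support_cons, List.mem_cons] at hz ⊢
        rcases hz with rfl | hz
        · exact Or.inl rfl
        · exact Or.inr (hRsub _ hz)
      · intro z hz hzS
        rw [Walk.support_cons, List.mem_cons] at hz
        rcases hz with rfl | hz
        · exact absurd hzS hx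
        · exact hRS z hz hzS

lemma core {H : SimpleGraph V} (hG : G.IsAcyclic)
    {F' : Finset (Sym2 V)} (hHG : H.deleteEdges (F' : Set (Sym2 V)) = G)
    {X : Set V} (hdism : IsDismembering H X F')
    {x m a b : V}
    (R₁ : G.Walk m a) (R₂ : G.Walk m b) (R₃ : G.Walk m x)
    (h₁ : R₁.IsPath) (h₂ : R₂.IsPath) (h₃ : R₃.IsPath)
    (i12 : ∀ z ∈ R₁.support, z ∈ R₂.support → z = m)
    (i13 : ∀ z ∈ R₁.support, z ∈ R₃.support → z = m)
    (i23 : ∀ z ∈ R₂.support, z ∈ R₃.support → z = m)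
    (hspec : ∀ v, G.Reachable x v → v ∈ insert x X ∪ edgeVerts F' → v = x ∨ v = a ∨ v = b)
    (hA : ¬R₁.Nil → a ∉ insert x X ∧ (F'.filter fun e => a ∈ e).card = 1)
    (hB : ¬R₂.Nil → b ∉ insert x X ∧ (F'.filter fun e => b ∈ e).card = 1) :
    ∃ D : Finset (Sym2 V), (D : Set (Sym2 V)) ⊆ G.edgeSet ∧ D.card ≤ 4 ∧
      IsDismembering H (insert x X) (F' ∪ D) := by
  classical
  set F₁ : Finset (Sym2 V) := (R₁.edges.filter fun e => m ∈ e).toFinset with hF₁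
  set F₂ : Finset (Sym2 V) := (R₂.edges.filter fun e => m ∈ e).toFinset with hF₂
  set F₃ : Finset (Sym2 V) := (R₃.edges.filter fun e => m ∈ e ∨ x ∈ e).toFinset with hF₃
  set D : Finset (Sym2 V) := F₁ ∪ F₂ ∪ F₃ with hD
  have hsubD : ∀ e ∈ D, (e ∈ R₁.edges ∧ m ∈ e) ∨ (e ∈ R₂.edges ∧ m ∈ e) ∨
      (e ∈ R₃.edges ∧ (m ∈ e ∨ x ∈ e)) := by
    intro e he
    simp only [hD, hF₁, hF₂, hF₃, Finset.mem_union, List.mem_toFinset, List.mem_filter,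
      decide_eq_true_eq] at he
    tauto
  have hD1 : ∀ e ∈ R₁.edges, m ∈ e → e ∈ D := by
    intro e he hme
    simp only [hD, hF₁, Finset.mem_union, List.mem_toFinset, List.mem_filter,
      decide_eq_true_eq]
    tauto
  have hD2 : ∀ e ∈ R₂.edges, m ∈ e → e ∈ D := by
    intro e he hme
    simp only [hD, hF₂, Finset.mem_union, List.mem_toFinset, List.mem_filter,
      decide_eq_true_eq]
    tauto
  have hD3 : ∀ e ∈ R₃.edges, m ∈ e ∨ x ∈ e → e ∈ D := by
    intro e he hme
    simp only [hD, hF₃, Finset.mem_union, List.mem_toFinset, List.mem_filter,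
      decide_eq_true_eq]
    tauto
  have hDedge : (D : Set (Sym2 V)) ⊆ G.edgeSet := by
    intro e he
    rw [Finset.mem_coe] at he
    rcases hsubD e he with ⟨h, _⟩ | ⟨h, _⟩ | ⟨h, _⟩
    · exact R₁.edges_subset_edgeSet h
    · exact R₂.edges_subset_edgeSet h
    · exact R₃.edges_subset_edgeSet h
  have hcard1 : ∀ {β : V} (R : G.Walk m β), R.IsPath →
      ((R.edges.filter fun e => m ∈ e).toFinset).card ≤ 1 := by
    intro β R hR
    apply Finset.card_le_one.mpr
    intro e₁ he₁ e₂ he₂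
    simp only [List.mem_toFinset, List.mem_filter, decide_eq_true_eq] at he₁ he₂
    exact unique_edge_start hR he₁.1 he₂.1 he₁.2 he₂.2
  have hcardD : D.card ≤ 4 := by
    have h3 : F₃.card ≤ 2 := by
      have hsub : F₃ ⊆ (R₃.edges.filter fun e => m ∈ e).toFinset ∪
          (R₃.edges.filter fun e => x ∈ e).toFinset := by
        intro e he
        simp only [hF₃, Finset.mem_union, List.mem_toFinset, List.mem_filter,
          decide_eq_true_eq] at he ⊢
        tauto
      have hx1 : ((R₃.edges.filter fun e => x ∈ e).toFinset).card ≤ 1 := by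
        apply Finset.card_le_one.mpr
        intro e₁ he₁ e₂ he₂
        simp only [List.mem_toFinset, List.mem_filter, decide_eq_true_eq] at he₁ he₂
        exact unique_edge_end h₃ he₁.1 he₂.1 he₁.2 he₂.2
      calc F₃.card ≤ _ := Finset.card_le_card hsub
        _ ≤ _ + _ := Finset.card_union_le _ _
        _ ≤ 1 + 1 := Nat.add_le_add (hcard1 R₃ h₃) hx1
    calc D.card ≤ (F₁ ∪ F₂).card + F₃.card := Finset.card_union_le _ _
      _ ≤ F₁.card + F₂.card + F₃.card := Nat.add_le_add_right (Finset.card_union_le _ _) _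
      _ ≤ 1 + 1 + 2 := by
          refine Nat.add_le_add (Nat.add_le_add ?_ ?_) h3
          · exact hcard1 R₁ h₁
          · exact hcard1 R₂ h₂
  refine ⟨D, hDedge, hcardD, ?_⟩
  have hGD : H.deleteEdges ((F' ∪ D : Finset (Sym2 V)) : Set (Sym2 V)) =
      G.deleteEdges (D : Set (Sym2 V)) := by
    rw [Finset.coe_union, ← SimpleGraph.deleteEdges_deleteEdges, hHG]
  rw [IsDismembering, hGD]
  set G' := G.deleteEdges (D : Set (Sym2 V)) with hG'
  have hmem : ∀ (v w' : V), v ∈ (G'.connectedComponentMk w').supp ↔ G'.Reachable w' v := by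
    intro v w'
    rw [SimpleGraph.ConnectedComponent.mem_supp_iff, SimpleGraph.ConnectedComponent.eq]
    exact ⟨Reachable.symm, Reachable.symm⟩
  -- vertices of D-edges are in the component of x in G
  have hWreach : ∀ {β : V} (R : G.Walk m β), ∀ z ∈ R.support, G.Reachable x z := by
    intro β R z hz
    exact (Reachable.symm ⟨R₃⟩).trans ⟨R.takeUntil z hz⟩
  have hVD : ∀ e ∈ D, ∀ z ∈ e, G.Reachable x z := by
    intro e he z hz
    rcases hsubD e he with ⟨h, _⟩ | ⟨h, _⟩ | ⟨h, _⟩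
    · exact hWreach R₁ z (mem_support_of_edge h hz)
    · exact hWreach R₂ z (mem_support_of_edge h hz)
    · exact hWreach R₃ z (mem_support_of_edge h hz)
  -- generic negative reachability across the cut star
  have negCross : ∀ {c₀ β γ : V} (P : G.Walk c₀ β) (Q : G.Walk c₀ γ), P.IsPath → Q.IsPath →
      (∀ y ∈ P.support, y ∈ Q.support → y = c₀) → (∀ e ∈ P.edges, c₀ ∈ e → e ∈ D) →
      ∀ z ∈ P.support, z ≠ c₀ → ∀ z' ∈ Q.support, ¬ G'.Reachable z z' := by
    intro c₀ β γ P Q hP hQ hPQ hPD z hz hzc z' hz' hreach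
    have hpath : ((P.takeUntil z hz).reverse.append (Q.takeUntil z' hz')).IsPath := by
      refine isPath_append (hP.takeUntil hz).reverse (hQ.takeUntil hz') ?_
      intro y hy₁ hy₂
      rw [Walk.support_reverse, List.mem_reverse] at hy₁
      exact hPQ y (P.support_takeUntil_subset hz hy₁) (Q.support_takeUntil_subset hz' hy₂)
    obtain ⟨e, he, hce⟩ := exists_edge_start (P.takeUntil z hz) (Ne.symm hzc)
    have heD : e ∈ (D : Set (Sym2 V)) := by
      rw [Finset.mem_coe]
      exact hPD e (P.edges_takeUntil_subset hz he) hce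
    have hein : e ∈ ((P.takeUntil z hz).reverse.append (Q.takeUntil z' hz')).edges := by
      rw [Walk.edges_append, List.mem_append, Walk.edges_reverse, List.mem_reverse]
      exact Or.inl he
    exact not_reachable_of_cut hG _ hpath heD hein hreach
  -- positive reachability within almost-cut arms
  have posArm : ∀ {β γ₁ γ₂ : V} (P : G.Walk m β) (Q₁ : G.Walk m γ₁) (Q₂ : G.Walk m γ₂),
      P.IsPath →
      (∀ y ∈ P.support, y ∈ Q₁.support → y = m) → (∀ y ∈ P.support, y ∈ Q₂.support → y = m) →
      (∀ e ∈ D, (e ∈ P.edges ∧ m ∈ e) ∨ e ∈ Q₁.edges ∨ e ∈ Q₂.edges) →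
      ∀ z, ∀ hz : z ∈ P.support, z ≠ m → G'.Reachable z β := by
    intro β γ₁ γ₂ P Q₁ Q₂ hP hPQ₁ hPQ₂ hDC z hz hzm
    apply reachable_of_avoid (P.dropUntil z hz)
    intro e he heD
    rw [Finset.mem_coe] at heD
    rcases hDC e heD with ⟨heP, hme⟩ | heQ | heQ
    · have hm2 : m ∈ (P.dropUntil z hz).support := mem_support_of_edge he hme
      exact hzm (takeUntil_inter hP hz m (P.takeUntil z hz).start_mem_support hm2).symm
    · obtain ⟨α, β', rfl, hab, hα, hβ⟩ := edge_ne heQ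
      have hα1 : α ∈ P.support :=
        P.support_dropUntil_subset hz (mem_support_of_edge he (Sym2.mem_mk_left _ _))
      have hβ1 : β' ∈ P.support :=
        P.support_dropUntil_subset hz (mem_support_of_edge he (Sym2.mem_mk_right _ _))
      exact hab ((hPQ₁ α hα1 hα).trans (hPQ₁ β' hβ1 hβ).symm)
    · obtain ⟨α, β', rfl, hab, hα, hβ⟩ := edge_ne heQ
      have hα1 : α ∈ P.support :=
        P.support_dropUntil_subset hz (mem_support_of_edge he (Sym2.mem_mk_left _ _))
      have hβ1 : β' ∈ P.support :=
        P.support_dropUntil_subset hz (mem_support_of_edge he (Sym2.mem_mk_right _ _))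
      exact hab ((hPQ₂ α hα1 hα).trans (hPQ₂ β' hβ1 hβ).symm)
  have pos1 : ∀ z, ∀ hz : z ∈ R₁.support, z ≠ m → G'.Reachable z a := by
    refine posArm R₁ R₂ R₃ h₁ i12 i13 ?_
    intro e he
    rcases hsubD e he with h | h | h
    · exact Or.inl h
    · exact Or.inr (Or.inl h.1)
    · exact Or.inr (Or.inr h.1)
  have pos2 : ∀ z, ∀ hz : z ∈ R₂.support, z ≠ m → G'.Reachable z b := by
    refine posArm R₂ R₁ R₃ h₂ (fun y hy hy' => i12 y hy' hy) i23 ?_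
    intro e he
    rcases hsubD e he with h | h | h
    · exact Or.inr (Or.inl h.1)
    · exact Or.inl h
    · exact Or.inr (Or.inr h.1)
  refine SimpleGraph.ConnectedComponent.ind fun w => ?_
  by_cases hwc : G.Reachable x w
  · -- the surgered component of x
    have hxall : ∀ v, G'.Reachable w v → G.Reachable x v := fun v h =>
      hwc.trans (h.mono (SimpleGraph.deleteEdges_le _))
    have hzone : ∀ v, v ∈ (G'.connectedComponentMk w).supp →
        v ∈ insert x X ∪ edgeVerts (F' ∪ D) →
        (v = x ∨ v = a ∨ v = b) ∨ ∃ e ∈ D, v ∈ e := by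
      intro v hv hvmem
      have hreach : G'.Reachable w v := (hmem v w).mp hv
      rcases hvmem with hvX | hvE
      · exact Or.inl (hspec v (hxall v hreach) (Or.inl hvX))
      · obtain ⟨e, he, hve⟩ := hvE
        rw [Finset.mem_union] at he
        rcases he with heF | heD
        · exact Or.inl (hspec v (hxall v hreach) (Or.inr ⟨e, heF, hve⟩))
        · exact Or.inr ⟨e, heD, hve⟩
    have hnilint : ∀ {γ : V} (P : G.Walk m γ), ∀ y ∈ P.support,
        y ∈ (Walk.nil : G.Walk m m).support → y = m := by
      intro γ P y _ hy
      rwa [Walk.support_nil, List.mem_singleton] at hy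
    have hD3m : ∀ e ∈ R₃.edges, m ∈ e → e ∈ D := fun e he hme => hD3 e he (Or.inl hme)
    by_cases hm : G'.Reachable w m
    · -- the piece containing the centre m
      left
      have toM : ∀ {β' : V} (P : G.Walk m β'), P.IsPath → (∀ e ∈ P.edges, m ∈ e → e ∈ D) →
          ∀ v ∈ P.support, G'.Reachable w v → v = m := by
        intro β' P hP hPD v hv hr
        by_contra hne
        exact negCross P (Walk.nil : G.Walk m m) hP Walk.IsPath.nil (hnilint P) hPD v hv hne m
          (Walk.start_mem_support _) (hr.symm.trans hm)
      have hkey : ∀ v, v ∈ (G'.connectedComponentMk w).supp →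
          v ∈ insert x X ∪ edgeVerts (F' ∪ D) → v = m := by
        intro v hv hvm
        have hrv : G'.Reachable w v := (hmem v w).mp hv
        rcases hzone v hv hvm with (rfl | rfl | rfl) | ⟨e, heD, hve⟩
        · exact toM R₃ h₃ hD3m v R₃.end_mem_support hrv
        · exact toM R₁ h₁ hD1 v R₁.end_mem_support hrv
        · exact toM R₂ h₂ hD2 v R₂.end_mem_support hrv
        · rcases hsubD e heD with ⟨he1, _⟩ | ⟨he2, _⟩ | ⟨he3, _⟩
          · exact toM R₁ h₁ hD1 v (mem_support_of_edge he1 hve) hrv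
          · exact toM R₂ h₂ hD2 v (mem_support_of_edge he2 hve) hrv
          · exact toM R₃ h₃ hD3m v (mem_support_of_edge he3 hve) hrv
      intro v hv v' hv'
      rw [hkey v hv.1 hv.2, hkey v' hv'.1 hv'.2]
    · by_cases hx : G'.Reachable w x
      · -- the piece containing x
        left
        have toX : ∀ v ∈ R₃.support, G'.Reachable w v → v = x := by
          intro v hv hr
          by_contra hne
          refine negCross R₃.reverse (Walk.nil : G.Walk x x) h₃.reverse Walk.IsPath.nil
            (fun y _ hy => by rwa [Walk.support_nil, List.mem_singleton] at hy)
            (fun e he hxe => hD3 e (by rwa [Walk.edges_reverse, List.mem_reverse] at he)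
              (Or.inr hxe)) v ?_ hne x (Walk.start_mem_support _) (hr.symm.trans hx)
          rwa [Walk.support_reverse, List.mem_reverse]
        have noArm : ∀ {β' : V} (P : G.Walk m β'), P.IsPath →
            (∀ y ∈ P.support, y ∈ R₃.support → y = m) → (∀ e ∈ P.edges, m ∈ e → e ∈ D) →
            ∀ v ∈ P.support, G'.Reachable w v → False := by
          intro β' P hP hint hPD v hv hr
          by_cases hvm : v = m
          · exact hm (hvm ▸ hr)
          · exact negCross P R₃ hP h₃ hint hPD v hv hvm x R₃.end_mem_support
              (hr.symm.trans hx)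
        have hkey : ∀ v, v ∈ (G'.connectedComponentMk w).supp →
            v ∈ insert x X ∪ edgeVerts (F' ∪ D) → v = x := by
          intro v hv hvm
          have hrv : G'.Reachable w v := (hmem v w).mp hv
          rcases hzone v hv hvm with (rfl | rfl | rfl) | ⟨e, heD, hve⟩
          · rfl
          · exact absurd (noArm R₁ h₁ i13 hD1 v R₁.end_mem_support hrv) not_false
          · exact absurd (noArm R₂ h₂ i23 hD2 v R₂.end_mem_support hrv) not_false
          · rcases hsubD e heD with ⟨he1, _⟩ | ⟨he2, _⟩ | ⟨he3, _⟩
            · exact absurd (noArm R₁ h₁ i13 hD1 v (mem_support_of_edge he1 hve) hrv) not_false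
            · exact absurd (noArm R₂ h₂ i23 hD2 v (mem_support_of_edge he2 hve) hrv) not_false
            · exact toX v (mem_support_of_edge he3 hve) hrv
        intro v hv v' hv'
        rw [hkey v hv.1 hv.2, hkey v' hv'.1 hv'.2]
      · by_cases harm1 : ∃ z, z ∈ R₁.support ∧ z ≠ m ∧ G'.Reachable w z
        · -- piece inside the first arm
          obtain ⟨z₀, hz₀s, hz₀m, hz₀r⟩ := harm1
          have hnn1 : ¬ R₁.Nil := by
            intro hn
            rw [Walk.nil_iff_support_eq] at hn
            rw [hn, List.mem_singleton] at hz₀s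
            exact hz₀m hz₀s
          obtain ⟨haX, hacard⟩ := hA hnn1
          obtain ⟨u₁, hu₁e, hu₁s, hu₁m⟩ := firstNbr R₁ h₁ hnn1
          have ham : m ≠ a := path_ne h₁ hnn1
          have hu₁b : u₁ ≠ b := fun h => hu₁m (i12 u₁ hu₁s (by rw [h]; exact R₂.end_mem_support))
          have hu₁x : u₁ ≠ x := fun h => hu₁m (i13 u₁ hu₁s (by rw [h]; exact R₃.end_mem_support))
          have hra : G'.Reachable w a := hz₀r.trans (pos1 z₀ hz₀s hz₀m)
          have hru : G'.Reachable w u₁ := hra.trans (pos1 u₁ hu₁s hu₁m).symm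
          have hkey : ∀ v, v ∈ (G'.connectedComponentMk w).supp →
              v ∈ insert x X ∪ edgeVerts (F' ∪ D) → v = a ∨ v = u₁ := by
            intro v hv hvm
            have hrv : G'.Reachable w v := (hmem v w).mp hv
            rcases hzone v hv hvm with (rfl | rfl | rfl) | ⟨e, heD, hve⟩
            · exact absurd hrv hx
            · exact Or.inl rfl
            · exfalso
              by_cases hn2 : R₂.Nil
              · exact hm (by rw [Walk.Nil.eq hn2]; exact hrv)
              · exact negCross R₁ R₂ h₁ h₂ i12 hD1 z₀ hz₀s hz₀m v R₂.end_mem_support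
                  (hz₀r.symm.trans hrv)
            · rcases hsubD e heD with ⟨he1, hme⟩ | ⟨he2, hme⟩ | ⟨he3, hme⟩
              · have heq : e = s(m, u₁) :=
                  unique_edge_start h₁ he1 hu₁e hme (Sym2.mem_mk_left _ _)
                rw [heq] at hve
                rcases Sym2.mem_iff.mp hve with rfl | rfl
                · exact absurd hrv hm
                · exact Or.inr rfl
              · exfalso
                have hvs : v ∈ R₂.support := mem_support_of_edge he2 hve
                by_cases hvm' : v = m
                · exact hm (hvm' ▸ hrv)
                · exact negCross R₂ R₁ h₂ h₁ (fun y hy hy' => i12 y hy' hy) hD2 v hvs hvm'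
                    z₀ hz₀s (hrv.symm.trans hz₀r)
              · exfalso
                have hvs : v ∈ R₃.support := mem_support_of_edge he3 hve
                by_cases hvm' : v = m
                · exact hm (hvm' ▸ hrv)
                · exact negCross R₃ R₁ h₃ h₁ (fun y hy hy' => i13 y hy' hy)
                    (fun e' he' hme' => hD3 e' he' (Or.inl hme')) v hvs hvm' z₀ hz₀s
                    (hrv.symm.trans hz₀r)
          by_cases hau : u₁ = a
          · left
            intro v hv v' hv'
            have e1 := (hkey v hv.1 hv.2).elim id (fun h => h.trans hau)
            have e2 := (hkey v' hv'.1 hv'.2).elim id (fun h => h.trans hau)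
            rw [e1, e2]
          · right
            have hu₁spec : u₁ ∉ insert x X ∪ edgeVerts F' := by
              intro hmem'
              rcases hspec u₁ (hxall u₁ hru) hmem' with h | h | h
              · exact hu₁x h
              · exact hau h
              · exact hu₁b h
            refine ⟨?_, a, u₁, fun h => hau h.symm, ?_, ?_, ?_⟩
            · apply Set.eq_empty_iff_forall_notMem.mpr
              rintro v ⟨hv, hvX⟩
              rcases hkey v hv (Or.inl hvX) with rfl | rfl
              · exact haX hvX
              · exact hu₁spec (Or.inl hvX)
            · ext v
              simp only [Set.mem_inter_iff, Set.mem_insert_iff, Set.mem_singleton_iff]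
              constructor
              · rintro ⟨hv, hvE⟩
                exact hkey v hv (Or.inr hvE)
              · rintro (rfl | rfl)
                · refine ⟨(hmem v w).mpr hra, ?_⟩
                  have hne : (F'.filter fun e => v ∈ e).Nonempty :=
                    Finset.card_pos.mp (by rw [hacard]; norm_num)
                  obtain ⟨e, he⟩ := hne
                  rw [Finset.mem_filter] at he
                  exact ⟨e, Finset.mem_union_left _ he.1, he.2⟩
                · exact ⟨(hmem v w).mpr hru,
                    s(m, v), Finset.mem_union_right _ (hD1 _ hu₁e (Sym2.mem_mk_left _ _)),
                    Sym2.mem_mk_right _ _⟩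
            · rw [Finset.filter_union]
              have hDa : (D.filter fun e => a ∈ e) = ∅ := by
                rw [Finset.filter_eq_empty_iff]
                intro e he hae
                rcases hsubD e he with ⟨he1, hme⟩ | ⟨he2, hme⟩ | ⟨he3, hme⟩
                · have heq : e = s(m, u₁) :=
                    unique_edge_start h₁ he1 hu₁e hme (Sym2.mem_mk_left _ _)
                  rw [heq] at hae
                  rcases Sym2.mem_iff.mp hae with h | h
                  · exact ham h.symm
                  · exact hau h.symm
                · exact ham (i12 a R₁.end_mem_support (mem_support_of_edge he2 hae)).symm
                · exact ham (i13 a R₁.end_mem_support (mem_support_of_edge he3 hae)).symm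
              rw [hDa, Finset.union_empty]
              exact hacard
            · rw [Finset.filter_union]
              have hFu : (F'.filter fun e => u₁ ∈ e) = ∅ := by
                rw [Finset.filter_eq_empty_iff]
                intro e he hue
                exact hu₁spec (Or.inr ⟨e, he, hue⟩)
              have hDu : (D.filter fun e => u₁ ∈ e) = {s(m, u₁)} := by
                apply Finset.ext
                intro e
                rw [Finset.mem_filter, Finset.mem_singleton]
                constructor
                · rintro ⟨he, hue⟩
                  rcases hsubD e he with ⟨he1, hme⟩ | ⟨he2, hme⟩ | ⟨he3, hme⟩
                  · exact unique_edge_start h₁ he1 hu₁e hme (Sym2.mem_mk_left _ _)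
                  · exact absurd (i12 u₁ hu₁s (mem_support_of_edge he2 hue)) hu₁m
                  · exact absurd (i13 u₁ hu₁s (mem_support_of_edge he3 hue)) hu₁m
                · rintro rfl
                  exact ⟨hD1 _ hu₁e (Sym2.mem_mk_left _ _), Sym2.mem_mk_right _ _⟩
              rw [hFu, hDu, Finset.empty_union, Finset.card_singleton]
        · by_cases harm2 : ∃ z, z ∈ R₂.support ∧ z ≠ m ∧ G'.Reachable w z
          · -- piece inside the second arm
            obtain ⟨z₀, hz₀s, hz₀m, hz₀r⟩ := harm2
            have hnn2 : ¬ R₂.Nil := by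
              intro hn
              rw [Walk.nil_iff_support_eq] at hn
              rw [hn, List.mem_singleton] at hz₀s
              exact hz₀m hz₀s
            obtain ⟨hbX, hbcard⟩ := hB hnn2
            obtain ⟨u₂, hu₂e, hu₂s, hu₂m⟩ := firstNbr R₂ h₂ hnn2
            have hbm : m ≠ b := path_ne h₂ hnn2
            have hu₂a : u₂ ≠ a := fun h =>
              hu₂m (i12 u₂ (by rw [h]; exact R₁.end_mem_support) hu₂s)
            have hu₂x : u₂ ≠ x := fun h =>
              hu₂m (i23 u₂ hu₂s (by rw [h]; exact R₃.end_mem_support))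
            have hrb : G'.Reachable w b := hz₀r.trans (pos2 z₀ hz₀s hz₀m)
            have hru : G'.Reachable w u₂ := hrb.trans (pos2 u₂ hu₂s hu₂m).symm
            have hkey : ∀ v, v ∈ (G'.connectedComponentMk w).supp →
                v ∈ insert x X ∪ edgeVerts (F' ∪ D) → v = b ∨ v = u₂ := by
              intro v hv hvm
              have hrv : G'.Reachable w v := (hmem v w).mp hv
              rcases hzone v hv hvm with (rfl | rfl | rfl) | ⟨e, heD, hve⟩
              · exact absurd hrv hx
              · exfalso
                by_cases hn1 : R₁.Nil
                · exact hm (by rw [Walk.Nil.eq hn1]; exact hrv)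
                · exact negCross R₂ R₁ h₂ h₁ (fun y hy hy' => i12 y hy' hy) hD2 z₀ hz₀s hz₀m
                    v R₁.end_mem_support (hz₀r.symm.trans hrv)
              · exact Or.inl rfl
              · rcases hsubD e heD with ⟨he1, hme⟩ | ⟨he2, hme⟩ | ⟨he3, hme⟩
                · exfalso
                  have hvs : v ∈ R₁.support := mem_support_of_edge he1 hve
                  by_cases hvm' : v = m
                  · exact hm (hvm' ▸ hrv)
                  · exact negCross R₁ R₂ h₁ h₂ i12 hD1 v hvs hvm' z₀ hz₀s
                      (hrv.symm.trans hz₀r)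
                · have heq : e = s(m, u₂) :=
                    unique_edge_start h₂ he2 hu₂e hme (Sym2.mem_mk_left _ _)
                  rw [heq] at hve
                  rcases Sym2.mem_iff.mp hve with rfl | rfl
                  · exact absurd hrv hm
                  · exact Or.inr rfl
                · exfalso
                  have hvs : v ∈ R₃.support := mem_support_of_edge he3 hve
                  by_cases hvm' : v = m
                  · exact hm (hvm' ▸ hrv)
                  · exact negCross R₃ R₂ h₃ h₂ (fun y hy hy' => i23 y hy' hy)
                      (fun e' he' hme' => hD3 e' he' (Or.inl hme')) v hvs hvm' z₀ hz₀s
                      (hrv.symm.trans hz₀r)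
            by_cases hbu : u₂ = b
            · left
              intro v hv v' hv'
              have e1 := (hkey v hv.1 hv.2).elim id (fun h => h.trans hbu)
              have e2 := (hkey v' hv'.1 hv'.2).elim id (fun h => h.trans hbu)
              rw [e1, e2]
            · right
              have hu₂spec : u₂ ∉ insert x X ∪ edgeVerts F' := by
                intro hmem'
                rcases hspec u₂ (hxall u₂ hru) hmem' with h | h | h
                · exact hu₂x h
                · exact hu₂a h
                · exact hbu h
              refine ⟨?_, b, u₂, fun h => hbu h.symm, ?_, ?_, ?_⟩
              · apply Set.eq_empty_iff_forall_notMem.mpr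
                rintro v ⟨hv, hvX⟩
                rcases hkey v hv (Or.inl hvX) with rfl | rfl
                · exact hbX hvX
                · exact hu₂spec (Or.inl hvX)
              · ext v
                simp only [Set.mem_inter_iff, Set.mem_insert_iff, Set.mem_singleton_iff]
                constructor
                · rintro ⟨hv, hvE⟩
                  exact hkey v hv (Or.inr hvE)
                · rintro (rfl | rfl)
                  · refine ⟨(hmem v w).mpr hrb, ?_⟩
                    have hne : (F'.filter fun e => v ∈ e).Nonempty :=
                      Finset.card_pos.mp (by rw [hbcard]; norm_num)
                    obtain ⟨e, he⟩ := hne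
                    rw [Finset.mem_filter] at he
                    exact ⟨e, Finset.mem_union_left _ he.1, he.2⟩
                  · exact ⟨(hmem v w).mpr hru,
                      s(m, v), Finset.mem_union_right _ (hD2 _ hu₂e (Sym2.mem_mk_left _ _)),
                      Sym2.mem_mk_right _ _⟩
              · rw [Finset.filter_union]
                have hDb : (D.filter fun e => b ∈ e) = ∅ := by
                  rw [Finset.filter_eq_empty_iff]
                  intro e he hbe
                  rcases hsubD e he with ⟨he1, hme⟩ | ⟨he2, hme⟩ | ⟨he3, hme⟩
                  · exact hbm (i12 b (mem_support_of_edge he1 hbe) R₂.end_mem_support).symm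
                  · have heq : e = s(m, u₂) :=
                      unique_edge_start h₂ he2 hu₂e hme (Sym2.mem_mk_left _ _)
                    rw [heq] at hbe
                    rcases Sym2.mem_iff.mp hbe with h | h
                    · exact hbm h.symm
                    · exact hbu h.symm
                  · exact hbm (i23 b R₂.end_mem_support (mem_support_of_edge he3 hbe)).symm
                rw [hDb, Finset.union_empty]
                exact hbcard
              · rw [Finset.filter_union]
                have hFu : (F'.filter fun e => u₂ ∈ e) = ∅ := by
                  rw [Finset.filter_eq_empty_iff]
                  intro e he hue
                  exact hu₂spec (Or.inr ⟨e, he, hue⟩)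
                have hDu : (D.filter fun e => u₂ ∈ e) = {s(m, u₂)} := by
                  apply Finset.ext
                  intro e
                  rw [Finset.mem_filter, Finset.mem_singleton]
                  constructor
                  · rintro ⟨he, hue⟩
                    rcases hsubD e he with ⟨he1, hme⟩ | ⟨he2, hme⟩ | ⟨he3, hme⟩
                    · exact absurd (i12 u₂ (mem_support_of_edge he1 hue) hu₂s) hu₂m
                    · exact unique_edge_start h₂ he2 hu₂e hme (Sym2.mem_mk_left _ _)
                    · exact absurd (i23 u₂ hu₂s (mem_support_of_edge he3 hue)) hu₂m
                  · rintro rfl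
                    exact ⟨hD2 _ hu₂e (Sym2.mem_mk_left _ _), Sym2.mem_mk_right _ _⟩
                rw [hFu, hDu, Finset.empty_union, Finset.card_singleton]
          · -- remaining pieces: interior of the third arm, or unmarked pieces
            have hkey3 : ∀ v, v ∈ (G'.connectedComponentMk w).supp →
                v ∈ insert x X ∪ edgeVerts (F' ∪ D) →
                v ∈ R₃.support ∧ v ≠ m ∧ v ≠ x ∧
                  ∃ e ∈ R₃.edges, v ∈ e ∧ (m ∈ e ∨ x ∈ e) := by
              intro v hv hvm
              have hrv : G'.Reachable w v := (hmem v w).mp hv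
              rcases hzone v hv hvm with (rfl | rfl | rfl) | ⟨e, heD, hve⟩
              · exact absurd hrv hx
              · exfalso
                by_cases hvm' : v = m
                · exact hm (hvm' ▸ hrv)
                · exact harm1 ⟨v, R₁.end_mem_support, hvm', hrv⟩
              · exfalso
                by_cases hvm' : v = m
                · exact hm (hvm' ▸ hrv)
                · exact harm2 ⟨v, R₂.end_mem_support, hvm', hrv⟩
              · rcases hsubD e heD with ⟨he1, hme⟩ | ⟨he2, hme⟩ | ⟨he3, hme⟩
                · exfalso
                  have hvs : v ∈ R₁.support := mem_support_of_edge he1 hve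
                  by_cases hvm' : v = m
                  · exact hm (hvm' ▸ hrv)
                  · exact harm1 ⟨v, hvs, hvm', hrv⟩
                · exfalso
                  have hvs : v ∈ R₂.support := mem_support_of_edge he2 hve
                  by_cases hvm' : v = m
                  · exact hm (hvm' ▸ hrv)
                  · exact harm2 ⟨v, hvs, hvm', hrv⟩
                · have hvs : v ∈ R₃.support := mem_support_of_edge he3 hve
                  have hvm' : v ≠ m := fun h => hm (h ▸ hrv)
                  have hvx : v ≠ x := fun h => hx (h ▸ hrv)
                  exact ⟨hvs, hvm', hvx, e, he3, hve, hme⟩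
            by_cases hW : ∃ z, z ∈ R₃.support ∧ z ≠ m ∧ z ≠ x ∧ G'.Reachable w z
            · obtain ⟨z₀, hz₀s, hz₀m, hz₀x, hz₀r⟩ := hW
              have hav3 : ∀ e ∈ R₃.edges, m ∉ e → x ∉ e → e ∉ (D : Set (Sym2 V)) := by
                intro e he hme hxe heD
                rw [Finset.mem_coe] at heD
                rcases hsubD e heD with ⟨he1, hme'⟩ | ⟨he2, hme'⟩ | ⟨he3, hme'⟩
                · obtain ⟨α, β', heq, hab, hα, hβ⟩ := edge_ne he1
                  have hα3 : α ∈ R₃.support :=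
                    mem_support_of_edge he (heq ▸ Sym2.mem_mk_left α β')
                  have hβ3 : β' ∈ R₃.support :=
                    mem_support_of_edge he (heq ▸ Sym2.mem_mk_right α β')
                  exact hab ((i13 α hα hα3).trans (i13 β' hβ hβ3).symm)
                · obtain ⟨α, β', heq, hab, hα, hβ⟩ := edge_ne he2
                  have hα3 : α ∈ R₃.support :=
                    mem_support_of_edge he (heq ▸ Sym2.mem_mk_left α β')
                  have hβ3 : β' ∈ R₃.support :=
                    mem_support_of_edge he (heq ▸ Sym2.mem_mk_right α β')
                  exact hab ((i23 α hα hα3).trans (i23 β' hβ hβ3).symm)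
                · rcases hme' with h | h
                  · exact hme h
                  · exact hxe h
              have hav3' : ∀ e ∈ R₃.reverse.edges, x ∉ e → m ∉ e →
                  e ∉ (D : Set (Sym2 V)) := by
                intro e he hxe hme
                exact hav3 e (by rwa [Walk.edges_reverse, List.mem_reverse] at he) hme hxe
              obtain ⟨u₃, hu₃e, hu₃s, hu₃m, hu₃x, hz₀u⟩ := intOne R₃ h₃ hav3 z₀ hz₀s hz₀m hz₀x
              obtain ⟨w₃, hw₃e', hw₃s', hw₃x, hw₃m, hz₀w⟩ := intOne R₃.reverse h₃.reverse hav3'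
                z₀ (by rwa [Walk.support_reverse, List.mem_reverse]) hz₀x hz₀m
              have hw₃e : s(w₃, x) ∈ R₃.edges := by
                have := hw₃e'
                rw [Walk.edges_reverse, List.mem_reverse, Sym2.eq_swap] at this
                exact this
              have hw₃s : w₃ ∈ R₃.support := by
                rwa [Walk.support_reverse, List.mem_reverse] at hw₃s'
              have hru₃ : G'.Reachable w u₃ := hz₀r.trans hz₀u
              have hrw₃ : G'.Reachable w w₃ := hz₀r.trans hz₀w
              have hkey : ∀ v, v ∈ (G'.connectedComponentMk w).supp →
                  v ∈ insert x X ∪ edgeVerts (F' ∪ D) → v = u₃ ∨ v = w₃ := by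
                intro v hv hvm
                obtain ⟨hvs, hvm', hvx, e, he3, hve, hme⟩ := hkey3 v hv hvm
                rcases hme with hme | hxe
                · have heq : e = s(m, u₃) :=
                    unique_edge_start h₃ he3 hu₃e hme (Sym2.mem_mk_left _ _)
                  rw [heq] at hve
                  rcases Sym2.mem_iff.mp hve with rfl | rfl
                  · exact absurd rfl hvm'
                  · exact Or.inl rfl
                · have heq : e = s(w₃, x) :=
                    unique_edge_end h₃ he3 hw₃e hxe (Sym2.mem_mk_right _ _)
                  rw [heq] at hve
                  rcases Sym2.mem_iff.mp hve with rfl | rfl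
                  · exact Or.inr rfl
                  · exact absurd rfl hvx
              have hu₃spec : u₃ ∉ insert x X ∪ edgeVerts F' := by
                intro hmem'
                rcases hspec u₃ (hxall u₃ hru₃) hmem' with h | h | h
                · exact hu₃x h
                · exact hu₃m (i13 u₃ (by rw [h]; exact R₁.end_mem_support) hu₃s)
                · exact hu₃m (i23 u₃ (by rw [h]; exact R₂.end_mem_support) hu₃s)
              have hw₃spec : w₃ ∉ insert x X ∪ edgeVerts F' := by
                intro hmem'
                rcases hspec w₃ (hxall w₃ hrw₃) hmem' with h | h | h
                · exact hw₃x h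
                · exact hw₃m (i13 w₃ (by rw [h]; exact R₁.end_mem_support) hw₃s)
                · exact hw₃m (i23 w₃ (by rw [h]; exact R₂.end_mem_support) hw₃s)
              by_cases huw : u₃ = w₃
              · left
                intro v hv v' hv'
                have e1 := (hkey v hv.1 hv.2).elim (fun h => h.trans huw) id
                have e2 := (hkey v' hv'.1 hv'.2).elim (fun h => h.trans huw) id
                rw [e1, e2]
              · right
                refine ⟨?_, u₃, w₃, huw, ?_, ?_, ?_⟩
                · apply Set.eq_empty_iff_forall_notMem.mpr
                  rintro v ⟨hv, hvX⟩
                  rcases hkey v hv (Or.inl hvX) with rfl | rfl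
                  · exact hu₃spec (Or.inl hvX)
                  · exact hw₃spec (Or.inl hvX)
                · ext v
                  simp only [Set.mem_inter_iff, Set.mem_insert_iff, Set.mem_singleton_iff]
                  constructor
                  · rintro ⟨hv, hvE⟩
                    exact hkey v hv (Or.inr hvE)
                  · rintro (rfl | rfl)
                    · exact ⟨(hmem v w).mpr hru₃,
                        s(m, v), Finset.mem_union_right _
                          (hD3 _ hu₃e (Or.inl (Sym2.mem_mk_left _ _))),
                        Sym2.mem_mk_right _ _⟩
                    · exact ⟨(hmem v w).mpr hrw₃,
                        s(v, x), Finset.mem_union_right _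
                          (hD3 _ hw₃e (Or.inr (Sym2.mem_mk_right _ _))),
                        Sym2.mem_mk_left _ _⟩
                · rw [Finset.filter_union]
                  have hFu : (F'.filter fun e => u₃ ∈ e) = ∅ := by
                    rw [Finset.filter_eq_empty_iff]
                    intro e he hue
                    exact hu₃spec (Or.inr ⟨e, he, hue⟩)
                  have hDu : (D.filter fun e => u₃ ∈ e) = {s(m, u₃)} := by
                    apply Finset.ext
                    intro e
                    rw [Finset.mem_filter, Finset.mem_singleton]
                    constructor
                    · rintro ⟨he, hue⟩
                      rcases hsubD e he with ⟨he1, hme⟩ | ⟨he2, hme⟩ | ⟨he3, hme⟩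
                      · exact absurd (i13 u₃ (mem_support_of_edge he1 hue) hu₃s) hu₃m
                      · exact absurd (i23 u₃ (mem_support_of_edge he2 hue) hu₃s) hu₃m
                      · rcases hme with hme | hxe
                        · exact unique_edge_start h₃ he3 hu₃e hme (Sym2.mem_mk_left _ _)
                        · exfalso
                          have heq : e = s(w₃, x) :=
                            unique_edge_end h₃ he3 hw₃e hxe (Sym2.mem_mk_right _ _)
                          rw [heq] at hue
                          rcases Sym2.mem_iff.mp hue with h | h
                          · exact huw h
                          · exact hu₃x h
                    · rintro rfl
                      exact ⟨hD3 _ hu₃e (Or.inl (Sym2.mem_mk_left _ _)),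
                        Sym2.mem_mk_right _ _⟩
                  rw [hFu, hDu, Finset.empty_union, Finset.card_singleton]
                · rw [Finset.filter_union]
                  have hFu : (F'.filter fun e => w₃ ∈ e) = ∅ := by
                    rw [Finset.filter_eq_empty_iff]
                    intro e he hue
                    exact hw₃spec (Or.inr ⟨e, he, hue⟩)
                  have hDu : (D.filter fun e => w₃ ∈ e) = {s(w₃, x)} := by
                    apply Finset.ext
                    intro e
                    rw [Finset.mem_filter, Finset.mem_singleton]
                    constructor
                    · rintro ⟨he, hue⟩
                      rcases hsubD e he with ⟨he1, hme⟩ | ⟨he2, hme⟩ | ⟨he3, hme⟩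
                      · exact absurd (i13 w₃ (mem_support_of_edge he1 hue) hw₃s) hw₃m
                      · exact absurd (i23 w₃ (mem_support_of_edge he2 hue) hw₃s) hw₃m
                      · rcases hme with hme | hxe
                        · exfalso
                          have heq : e = s(m, u₃) :=
                            unique_edge_start h₃ he3 hu₃e hme (Sym2.mem_mk_left _ _)
                          rw [heq] at hue
                          rcases Sym2.mem_iff.mp hue with h | h
                          · exact hw₃m h
                          · exact huw h.symm
                        · exact unique_edge_end h₃ he3 hw₃e hxe (Sym2.mem_mk_right _ _)
                    · rintro rfl
                      exact ⟨hD3 _ hw₃e (Or.inr (Sym2.mem_mk_right _ _)),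
                        Sym2.mem_mk_left _ _⟩
                  rw [hFu, hDu, Finset.empty_union, Finset.card_singleton]
            · left
              intro v hv v' hv'
              exfalso
              obtain ⟨hvs, hvm', hvx, _⟩ := hkey3 v hv.1 hv.2
              exact hW ⟨v, hvs, hvm', hvx, (hmem v w).mp hv.1⟩
  · -- old component, untouched by the surgery
    have hsupp_eq : (G'.connectedComponentMk w).supp = (G.connectedComponentMk w).supp := by
      ext v
      rw [hmem, SimpleGraph.ConnectedComponent.mem_supp_iff, SimpleGraph.ConnectedComponent.eq]
      constructor
      · intro h
        exact (h.mono (SimpleGraph.deleteEdges_le _)).symm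
      · intro h
        obtain ⟨p0⟩ := h
        have havoid : ∀ e ∈ p0.bypass.edges, e ∉ (D : Set (Sym2 V)) := by
          intro e he heD
          rw [Finset.mem_coe] at heD
          obtain ⟨α, β', rfl, hab, hα, hβ⟩ := edge_ne he
          have hxα : G.Reachable x α := hVD _ heD α (Sym2.mem_mk_left _ _)
          have hαw : G.Reachable α w := ⟨p0.bypass.dropUntil α hα⟩
          exact hwc (hxα.trans hαw)
        exact (reachable_of_avoid p0.bypass havoid).symm
    have hdism' := hdism
    rw [IsDismembering, hHG] at hdism'
    have hnotxw : ∀ v, v ∈ (G.connectedComponentMk w).supp → ¬ G.Reachable x v := by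
      intro v hv hxv
      rw [SimpleGraph.ConnectedComponent.mem_supp_iff, SimpleGraph.ConnectedComponent.eq] at hv
      exact hwc (hxv.trans hv)
    have hXeq : (G'.connectedComponentMk w).supp ∩ (insert x X) =
        (G.connectedComponentMk w).supp ∩ X := by
      rw [hsupp_eq]
      ext v
      simp only [Set.mem_inter_iff, Set.mem_insert_iff]
      constructor
      · rintro ⟨hv, rfl | hvX⟩
        · exact absurd (SimpleGraph.Reachable.refl v) (hnotxw v hv)
        · exact ⟨hv, hvX⟩
      · rintro ⟨hv, hvX⟩
        exact ⟨hv, Or.inr hvX⟩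
    have hEeq : (G'.connectedComponentMk w).supp ∩ edgeVerts (F' ∪ D) =
        (G.connectedComponentMk w).supp ∩ edgeVerts F' := by
      rw [hsupp_eq]
      ext v
      simp only [Set.mem_inter_iff, edgeVerts, Set.mem_setOf_eq, Finset.mem_union]
      constructor
      · rintro ⟨hv, e, (heF | heD), hve⟩
        · exact ⟨hv, e, heF, hve⟩
        · exact absurd (hVD e heD v hve) (hnotxw v hv)
      · rintro ⟨hv, e, heF, hve⟩
        exact ⟨hv, e, Or.inl heF, hve⟩
    have hfilter : ∀ v ∈ (G.connectedComponentMk w).supp,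
        ((F' ∪ D).filter fun e => v ∈ e) = F'.filter fun e => v ∈ e := by
      intro v hv
      rw [Finset.filter_union]
      have : (D.filter fun e => v ∈ e) = ∅ := by
        rw [Finset.filter_eq_empty_iff]
        intro e he hve
        exact hnotxw v hv (hVD e he v hve)
      rw [this, Finset.union_empty]
    rcases hdism' (G.connectedComponentMk w) with hsub | ⟨hXe, a', b', hne, hset, c1, c2⟩
    · left
      rw [Set.inter_union_distrib_left, hXeq, hEeq, ← Set.inter_union_distrib_left]
      exact hsub
    · right
      refine ⟨by rw [hXeq]; exact hXe, a', b', hne, by rw [hEeq]; exact hset, ?_, ?_⟩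
      · rw [hfilter a' ?_]
        · exact c1
        · have : a' ∈ ({a', b'} : Set V) := Set.mem_insert _ _
          rw [← hset] at this
          exact this.1
      · rw [hfilter b' ?_]
        · exact c2
        · have : b' ∈ ({a', b'} : Set V) := Set.mem_insert_iff.mpr (Or.inr rfl)
          rw [← hset] at this
          exact this.1

lemma main (H : SimpleGraph V) (hH : H.IsAcyclic) (X : Finset V) :
    ∃ F : Finset (Sym2 V), (F : Set (Sym2 V)) ⊆ H.edgeSet ∧ F.card ≤ 4 * X.card ∧
      IsDismembering H (X : Set V) F := by
  classical
  induction X using Finset.induction_on with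
  | empty =>
    refine ⟨∅, by simp, by simp, ?_⟩
    intro c
    left
    intro v hv v' hv'
    exfalso
    rcases hv.2 with h | ⟨e, he, _⟩
    · simp at h
    · exact absurd he (Finset.notMem_empty e)
  | @insert x s hxs ih =>
    obtain ⟨F', hF'sub, hF'card, hF'dism⟩ := ih
    have hGac : (H.deleteEdges (F' : Set (Sym2 V))).IsAcyclic :=
      acyclic_anti (SimpleGraph.deleteEdges_le _) hH
    set G := H.deleteEdges (F' : Set (Sym2 V)) with hGdef
    have hGeq : H.deleteEdges (F' : Set (Sym2 V)) = G := rfl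
    have hsupp : ∀ v : V, v ∈ (G.connectedComponentMk x).supp ↔ G.Reachable x v := by
      intro v
      rw [SimpleGraph.ConnectedComponent.mem_supp_iff, SimpleGraph.ConnectedComponent.eq]
      exact ⟨Reachable.symm, Reachable.symm⟩
    have hfinish : ∀ D : Finset (Sym2 V), (D : Set (Sym2 V)) ⊆ G.edgeSet → D.card ≤ 4 →
        IsDismembering H (insert x (s : Set V)) (F' ∪ D) →
        ∃ F : Finset (Sym2 V), (F : Set (Sym2 V)) ⊆ H.edgeSet ∧
          F.card ≤ 4 * (insert x s).card ∧
          IsDismembering H ((insert x s : Finset V) : Set V) F := by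
      intro D hDsub hDcard hdm
      refine ⟨F' ∪ D, ?_, ?_, ?_⟩
      · rw [Finset.coe_union]
        refine Set.union_subset hF'sub ?_
        exact hDsub.trans (SimpleGraph.edgeSet_mono (SimpleGraph.deleteEdges_le _))
      · calc (F' ∪ D).card ≤ F'.card + D.card := Finset.card_union_le _ _
          _ ≤ 4 * s.card + 4 := Nat.add_le_add hF'card hDcard
          _ = 4 * (s.card + 1) := by ring
          _ = 4 * (insert x s).card := by rw [Finset.card_insert_of_notMem hxs]
      · rwa [Finset.coe_insert]
    rcases hF'dism (G.connectedComponentMk x) with hsub | ⟨hXe, a, b, hne, hset, c1, c2⟩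
    · by_cases hs0 : ∃ v, v ∈ (G.connectedComponentMk x).supp ∩
          ((s : Set V) ∪ edgeVerts F') ∧ v ≠ x
      · obtain ⟨s0, hs0mem, hs0x⟩ := hs0
        have hreach : G.Reachable x s0 := (hsupp s0).mp hs0mem.1
        obtain ⟨q0⟩ := hreach
        have htriv : ∀ {γ : V} (W : G.Walk s0 γ), ∀ z ∈ (Walk.nil : G.Walk s0 s0).support,
            z ∈ W.support → z = s0 := by
          intro γ W z hz _
          rwa [Walk.support_nil, List.mem_singleton] at hz
        have hspec0 : ∀ v, G.Reachable x v → v ∈ insert x (s : Set V) ∪ edgeVerts F' →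
            v = x ∨ v = s0 ∨ v = s0 := by
          intro v hrv hvm
          have hvsupp : v ∈ (G.connectedComponentMk x).supp := (hsupp v).mpr hrv
          rcases hvm with hvX | hvE
          · rcases Set.mem_insert_iff.mp hvX with rfl | hvs
            · exact Or.inl rfl
            · exact Or.inr (Or.inl (hsub ⟨hvsupp, Or.inl hvs⟩ hs0mem))
          · exact Or.inr (Or.inl (hsub ⟨hvsupp, Or.inr hvE⟩ hs0mem))
        obtain ⟨D, hDsub, hDcard, hdm⟩ := core hGac hGeq hF'dism
          (Walk.nil : G.Walk s0 s0) (Walk.nil : G.Walk s0 s0) q0.bypass.reverse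
          Walk.IsPath.nil Walk.IsPath.nil q0.bypass_isPath.reverse
          (htriv _) (htriv _) (htriv _)
          hspec0 (fun hnn => absurd Walk.nil_nil hnn) (fun hnn => absurd Walk.nil_nil hnn)
        exact hfinish D hDsub hDcard hdm
      · have htriv : ∀ {γ : V} (W : G.Walk x γ), ∀ z ∈ (Walk.nil : G.Walk x x).support,
            z ∈ W.support → z = x := by
          intro γ W z hz _
          rwa [Walk.support_nil, List.mem_singleton] at hz
        have hspec0 : ∀ v, G.Reachable x v → v ∈ insert x (s : Set V) ∪ edgeVerts F' →
            v = x ∨ v = x ∨ v = x := by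
          intro v hrv hvm
          have hvsupp : v ∈ (G.connectedComponentMk x).supp := (hsupp v).mpr hrv
          by_cases hvx : v = x
          · exact Or.inl hvx
          · exfalso
            rcases hvm with hvX | hvE
            · rcases Set.mem_insert_iff.mp hvX with rfl | hvs
              · exact hvx rfl
              · exact hs0 ⟨v, ⟨hvsupp, Or.inl hvs⟩, hvx⟩
            · exact hs0 ⟨v, ⟨hvsupp, Or.inr hvE⟩, hvx⟩
        obtain ⟨D, hDsub, hDcard, hdm⟩ := core hGac hGeq hF'dism
          (Walk.nil : G.Walk x x) (Walk.nil : G.Walk x x) (Walk.nil : G.Walk x x)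
          Walk.IsPath.nil Walk.IsPath.nil Walk.IsPath.nil
          (htriv _) (htriv _) (htriv _)
          hspec0 (fun hnn => absurd Walk.nil_nil hnn) (fun hnn => absurd Walk.nil_nil hnn)
        exact hfinish D hDsub hDcard hdm
    · have hain : a ∈ (G.connectedComponentMk x).supp := by
        have : a ∈ ({a, b} : Set V) := Set.mem_insert _ _
        rw [← hset] at this
        exact this.1
      have hbin : b ∈ (G.connectedComponentMk x).supp := by
        have : b ∈ ({a, b} : Set V) := Set.mem_insert_iff.mpr (Or.inr rfl)
        rw [← hset] at this
        exact this.1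
      have hxa : G.Reachable x a := (hsupp a).mp hain
      have hxb : G.Reachable x b := (hsupp b).mp hbin
      have hab : G.Reachable a b := hxa.symm.trans hxb
      obtain ⟨q0⟩ := hxa
      obtain ⟨p0⟩ := hab
      obtain ⟨m, R, hRp, hmP, hRsubQ, hRS⟩ := firstHit {z | z ∈ p0.bypass.support}
        q0.bypass q0.bypass_isPath (Set.mem_setOf_eq ▸ p0.bypass.start_mem_support)
      rw [Set.mem_setOf_eq] at hmP
      have hR₁p : ((p0.bypass.takeUntil m hmP).reverse).IsPath :=
        (p0.bypass_isPath.takeUntil hmP).reverse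
      have hR₂p : (p0.bypass.dropUntil m hmP).IsPath := p0.bypass_isPath.dropUntil hmP
      have hxP : x ∈ p0.bypass.support → x = m := fun hxp =>
        hRS x R.start_mem_support (Set.mem_setOf_eq ▸ hxp)
      have i12' : ∀ z ∈ (p0.bypass.takeUntil m hmP).reverse.support,
          z ∈ (p0.bypass.dropUntil m hmP).support → z = m := by
        intro z hz hz'
        rw [Walk.support_reverse, List.mem_reverse] at hz
        exact takeUntil_inter p0.bypass_isPath hmP z hz hz'
      have i13' : ∀ z ∈ (p0.bypass.takeUntil m hmP).reverse.support,
          z ∈ R.reverse.support → z = m := by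
        intro z hz hz'
        rw [Walk.support_reverse, List.mem_reverse] at hz hz'
        exact hRS z hz' (Set.mem_setOf_eq ▸ p0.bypass.support_takeUntil_subset hmP hz)
      have i23' : ∀ z ∈ (p0.bypass.dropUntil m hmP).support,
          z ∈ R.reverse.support → z = m := by
        intro z hz hz'
        rw [Walk.support_reverse, List.mem_reverse] at hz'
        exact hRS z hz' (Set.mem_setOf_eq ▸ p0.bypass.support_dropUntil_subset hmP hz)
      have hspecP : ∀ v, G.Reachable x v → v ∈ insert x (s : Set V) ∪ edgeVerts F' →
          v = x ∨ v = a ∨ v = b := by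
        intro v hrv hvm
        have hvsupp : v ∈ (G.connectedComponentMk x).supp := (hsupp v).mpr hrv
        rcases hvm with hvX | hvE
        · rcases Set.mem_insert_iff.mp hvX with rfl | hvs
          · exact Or.inl rfl
          · exact absurd (Set.eq_empty_iff_forall_notMem.mp hXe v ⟨hvsupp, hvs⟩) not_false
        · have : v ∈ ({a, b} : Set V) := hset ▸ ⟨hvsupp, hvE⟩
          rcases Set.mem_insert_iff.mp this with rfl | h
          · exact Or.inr (Or.inl rfl)
          · exact Or.inr (Or.inr h)
      have hAP : ¬ (p0.bypass.takeUntil m hmP).reverse.Nil →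
          a ∉ insert x (s : Set V) ∧ (F'.filter fun e => a ∈ e).card = 1 := by
        intro hnn
        have hma : m ≠ a := by
          intro h
          exact hnn (path_nil hR₁p h)
        refine ⟨?_, c1⟩
        intro hmem'
        rcases Set.mem_insert_iff.mp hmem' with rfl | hvs
        · exact hma (hxP p0.bypass.start_mem_support).symm
        · exact Set.eq_empty_iff_forall_notMem.mp hXe a ⟨hain, hvs⟩
      have hBP : ¬ (p0.bypass.dropUntil m hmP).Nil →
          b ∉ insert x (s : Set V) ∧ (F'.filter fun e => b ∈ e).card = 1 := by
        intro hnn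
        have hmb : m ≠ b := by
          intro h
          exact hnn (path_nil hR₂p h)
        refine ⟨?_, c2⟩
        intro hmem'
        rcases Set.mem_insert_iff.mp hmem' with rfl | hvs
        · exact hmb (hxP p0.bypass.end_mem_support).symm
        · exact Set.eq_empty_iff_forall_notMem.mp hXe b ⟨hbin, hvs⟩
      obtain ⟨D, hDsub, hDcard, hdm⟩ := core hGac hGeq hF'dism
        (p0.bypass.takeUntil m hmP).reverse (p0.bypass.dropUntil m hmP) R.reverse
        hR₁p hR₂p hRp.reverse i12' i13' i23' hspecP hAP hBP
      exact hfinish D hDsub hDcard hdm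

end Stmt4Aux

end Stmt4AuxSection

/-- If deleting the edge set `F₀` from `G` leaves a forest, then there is a set
`F ⊆ E(G) ∖ F₀` with `|F| ≤ 10 |F₀|` that is dismembering for `(G ∖ F₀, V(F₀))`. -/
theorem stmt4 {V : Type*} [Fintype V] [DecidableEq V] (G : SimpleGraph V)
    (F₀ : Finset (Sym2 V)) (hF₀ : (F₀ : Set (Sym2 V)) ⊆ G.edgeSet)
    (hforest : (G.deleteEdges (F₀ : Set (Sym2 V))).IsAcyclic) :
    ∃ F : Finset (Sym2 V),
      (F : Set (Sym2 V)) ⊆ G.edgeSet ∧ (∀ e ∈ F, e ∉ F₀) ∧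
      F.card ≤ 10 * F₀.card ∧
      IsDismembering (G.deleteEdges (F₀ : Set (Sym2 V))) (edgeVerts F₀) F := by
  classical
  set Xf : Finset V := F₀.biUnion (fun e => Finset.univ.filter (fun v => v ∈ e)) with hXf
  have hXfcoe : (Xf : Set V) = edgeVerts F₀ := by
    ext v
    simp only [hXf, Finset.coe_biUnion, Set.mem_iUnion, Finset.mem_coe, Finset.mem_filter,
      Finset.mem_univ, true_and, edgeVerts, Set.mem_setOf_eq]
    constructor
    · rintro ⟨e, he, hve⟩
      exact ⟨e, he, hve⟩
    · rintro ⟨e, he, hve⟩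
      exact ⟨e, he, hve⟩
  have hXfcard : Xf.card ≤ 2 * F₀.card := by
    refine le_trans Finset.card_biUnion_le ?_
    have hstep : ∀ e ∈ F₀, (Finset.univ.filter (fun v => v ∈ e)).card ≤ 2 := by
      intro e _
      induction e with
      | _ α β =>
        have hsub : Finset.univ.filter (fun v => v ∈ s(α, β)) ⊆ {α, β} := by
          intro v hv
          rw [Finset.mem_filter] at hv
          rcases Sym2.mem_iff.mp hv.2 with rfl | rfl
          · exact Finset.mem_insert_self _ _
          · exact Finset.mem_insert_of_mem (Finset.mem_singleton_self _)
        refine le_trans (Finset.card_le_card hsub) ?_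
        refine le_trans (Finset.card_insert_le _ _) ?_
        rw [Finset.card_singleton]
    calc ∑ e ∈ F₀, (Finset.univ.filter (fun v => v ∈ e)).card ≤ ∑ _e ∈ F₀, 2 :=
          Finset.sum_le_sum hstep
      _ = 2 * F₀.card := by rw [Finset.sum_const, smul_eq_mul, mul_comm]
  obtain ⟨F, hFsub, hFcard, hFdism⟩ :=
    Stmt4Aux.main (G.deleteEdges (F₀ : Set (Sym2 V))) hforest Xf
  rw [SimpleGraph.edgeSet_deleteEdges] at hFsub
  refine ⟨F, ?_, ?_, ?_, ?_⟩
  · intro e he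
    exact (hFsub he).1
  · intro e he heF₀
    exact (hFsub (Finset.mem_coe.mpr he)).2 (Finset.mem_coe.mpr heF₀)
  · calc F.card ≤ 4 * Xf.card := hFcard
      _ ≤ 4 * (2 * F₀.card) := Nat.mul_le_mul_left _ hXfcard
      _ = 8 * F₀.card := by ring
      _ ≤ 10 * F₀.card := Nat.mul_le_mul_right _ (by norm_num)
  · rwa [hXfcoe] at hFdism
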